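/- Let k ∈ ℂ∖{0}, and define v₁ = 1 + |ρσ|²(|k|²+1)/(|k|²((|k|²+1)² − |ρσ|²)), v₄ = 1 + |ρσ|²(|k|²+1)/((|k|²+1)² − |ρσ|²), v₂v₃-product term |s₃|² = |ρσ|²(|k|²+1)⁴/(|k|²((|k|²+1)² − |ρσ|²)²). If |ρσ| < |k|²+1 then the one-soliton matrix v = (v₁, −s₃*; −s₃, v₄) is positive definite. -/

import Mathlib

open Matrix Complex
open scoped ComplexOrder


private lemma quad_aux (w₁ w₄ S A B r : ℝ) (hw₁ : 0 < w₁) (hw₄ : 0 < w₄)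
    (hdet : w₁ * w₄ - S ^ 2 = 1) (hS : 0 ≤ S) (hA : 0 ≤ A) (hB : 0 ≤ B)
    (hAB : 0 < A ∨ 0 < B) (hr : r ≤ S * A * B) :
    0 < w₁ * A ^ 2 + w₄ * B ^ 2 - 2 * r := by
  have key : 0 < w₁ * A ^ 2 + w₄ * B ^ 2 - 2 * (S * A * B) := by
    rcases hAB with hA' | hB'
    · have h1 : w₄ * (w₁ * A ^ 2 + w₄ * B ^ 2 - 2 * (S * A * B)) =
          (w₄ * B - S * A) ^ 2 + (w₁ * w₄ - S ^ 2) * (A * A) := by ring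
      have h2 : 0 < w₄ * (w₁ * A ^ 2 + w₄ * B ^ 2 - 2 * (S * A * B)) := by
        rw [h1, hdet]
        nlinarith [sq_nonneg (w₄ * B - S * A), mul_pos hA' hA']
      nlinarith [h2, hw₄]
    · have h1 : w₁ * (w₁ * A ^ 2 + w₄ * B ^ 2 - 2 * (S * A * B)) =
          (w₁ * A - S * B) ^ 2 + (w₁ * w₄ - S ^ 2) * (B * B) := by ring
      have h2 : 0 < w₁ * (w₁ * A ^ 2 + w₄ * B ^ 2 - 2 * (S * A * B)) := by
        rw [h1, hdet]
        nlinarith [sq_nonneg (w₁ * A - S * B), mul_pos hB' hB']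
      nlinarith [h2, hw₁]
  linarith

theorem one_soliton_positive_definite
    (k ρ σ : ℂ) (hk : k ≠ 0)
    (hlt : ‖ρ * σ‖ < Complex.normSq k + 1)
    (v₁ v₄ : ℝ) (s₃ : ℂ)
    (hv₁ : v₁ = 1 + Complex.normSq (ρ * σ) * (Complex.normSq k + 1) /
        (Complex.normSq k * ((Complex.normSq k + 1) ^ 2 - Complex.normSq (ρ * σ))))
    (hv₄ : v₄ = 1 + Complex.normSq (ρ * σ) * (Complex.normSq k + 1) /
        ((Complex.normSq k + 1) ^ 2 - Complex.normSq (ρ * σ)))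
    (hs₃ : s₃ = ((1 : ℂ) / k) *
        (ρ * σ * ((Complex.normSq k : ℂ) + 1) ^ 2 /
          (((Complex.normSq k : ℂ) + 1) ^ 2 - (Complex.normSq (ρ * σ) : ℂ))))
    (v : Matrix (Fin 2) (Fin 2) ℂ)
    (hv : v = !![(v₁ : ℂ), -(starRingEnd ℂ) s₃; -s₃, (v₄ : ℂ)]) :
    v.PosDef := by
  set K := Complex.normSq k with hKdef
  set P := Complex.normSq (ρ * σ) with hPdef
  have hKpos : 0 < K := Complex.normSq_pos.mpr hk
  have hPnn : 0 ≤ P := Complex.normSq_nonneg _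
  have habs : ‖ρ * σ‖ ^ 2 = P := Complex.sq_norm _
  have hD : 0 < (K + 1) ^ 2 - P := by
    nlinarith [norm_nonneg (ρ * σ)]
  have hv₁pos : 0 < v₁ := by
    have h0 : 0 ≤ P * (K + 1) / (K * ((K + 1) ^ 2 - P)) :=
      div_nonneg (mul_nonneg hPnn (by linarith)) (le_of_lt (mul_pos hKpos hD))
    rw [hv₁]; linarith
  have hv₄pos : 0 < v₄ := by
    have h0 : 0 ≤ P * (K + 1) / ((K + 1) ^ 2 - P) :=
      div_nonneg (mul_nonneg hPnn (by linarith)) (le_of_lt hD)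
    rw [hv₄]; linarith
  have hs₃' : s₃ = ((1 : ℂ) / k) *
      ((ρ * σ) * (((K + 1 : ℝ) : ℂ)) ^ 2 / ((((K + 1) ^ 2 - P : ℝ)) : ℂ)) := by
    rw [hs₃]; push_cast; ring
  have hns : Complex.normSq s₃ = P * (K + 1) ^ 4 / (K * ((K + 1) ^ 2 - P) ^ 2) := by
    rw [hs₃']
    rw [Complex.normSq_mul, Complex.normSq_div, Complex.normSq_div, Complex.normSq_mul,
      Complex.normSq_one, show (((K + 1 : ℝ) : ℂ)) ^ 2 = (((K + 1) ^ 2 : ℝ) : ℂ) by push_cast; ring,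
      Complex.normSq_ofReal, Complex.normSq_ofReal, ← hPdef, ← hKdef]
    field_simp
  have hKne : K ≠ 0 := ne_of_gt hKpos
  have hDne : (K + 1) ^ 2 - P ≠ 0 := ne_of_gt hD
  have hdet : v₁ * v₄ - Complex.normSq s₃ = 1 := by
    rw [hv₁, hv₄, hns]
    field_simp
    ring
  rw [Matrix.posDef_iff_dotProduct_mulVec]
  constructor
  · rw [hv, Matrix.IsHermitian]
    ext i j
    fin_cases i <;> fin_cases j <;>
      simp [Matrix.conjTranspose_apply, Complex.conj_ofReal]
  · intro x hx
    have hab : x 0 ≠ 0 ∨ x 1 ≠ 0 := by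
      by_contra h
      push_neg at h
      exact hx (by ext i; fin_cases i <;> simp [h.1, h.2])
    set a := x 0 with ha
    set b := x 1 with hb
    have key : star x ⬝ᵥ (v *ᵥ x) =
        ((v₁ * Complex.normSq a + v₄ * Complex.normSq b
          - 2 * (s₃ * a * (starRingEnd ℂ) b).re : ℝ) : ℂ) := by
      simp [hv, dotProduct, Matrix.mulVec, Fin.sum_univ_two, ← ha, ← hb]
      apply Complex.ext <;>
        simp [Complex.normSq_apply, Complex.mul_re, Complex.mul_im] <;> ring
    rw [key, ← Complex.ofReal_zero, Complex.real_lt_real]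
    have hre : (s₃ * a * (starRingEnd ℂ) b).re ≤
        ‖s₃‖ * ‖a‖ * ‖b‖ := by
      calc (s₃ * a * (starRingEnd ℂ) b).re ≤ ‖s₃ * a * (starRingEnd ℂ) b‖ :=
            Complex.re_le_norm _
        _ = ‖s₃‖ * ‖a‖ * ‖b‖ := by
            rw [norm_mul, norm_mul, Complex.norm_conj]
    have hdet' : v₁ * v₄ - ‖s₃‖ ^ 2 = 1 := by
      rw [Complex.sq_norm]; exact hdet
    have hAB : 0 < ‖a‖ ∨ 0 < ‖b‖ := by
      rcases hab with h | h
      · exact Or.inl (norm_pos_iff.mpr h)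
      · exact Or.inr (norm_pos_iff.mpr h)
    have := quad_aux v₁ v₄ (‖s₃‖) (‖a‖) (‖b‖)
      ((s₃ * a * (starRingEnd ℂ) b).re) hv₁pos hv₄pos hdet'
      (norm_nonneg _) (norm_nonneg _) (norm_nonneg _) hAB hre
    rw [← Complex.sq_norm a, ← Complex.sq_norm b]
    linarith
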